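/- Let (C, Δ, δ) be a coalgebra and suppose every element of C lies in a finite-dimensional sub-coalgebra (Fundamental Theorem of Coalgebras). Then for every linear functional ψ on C and every c ∈ C, the series e_⋆^ψ(c) := Σ_{n≥0} ψ^{⋆n}(c)/n! converges in ℂ, where ψ^{⋆0} = δ and ψ^{⋆(n+1)} = ψ^{⋆n} ⋆ ψ; moreover e_⋆^ψ(c) = δ(e^{T(ψ)} c) where e^{T(ψ)} is computed on any finite-dimensional sub-coalgebra containing c. -/

import Mathlib

open TensorProduct

/-- The operator `T ψ = (id ⊗ ψ) ∘ Δ` on a coalgebra. -/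
noncomputable def opT {A : Type*} [AddCommGroup A] [Module ℂ A] [Coalgebra ℂ A]
    (ψ : A →ₗ[ℂ] ℂ) : A →ₗ[ℂ] A :=
  (TensorProduct.rid ℂ A).toLinearMap ∘ₗ
    (TensorProduct.map LinearMap.id ψ) ∘ₗ Coalgebra.comul

/-- Convolution `φ ⋆ ψ = (φ ⊗ ψ) ∘ Δ` of linear functionals on a coalgebra. -/
noncomputable def conv {A : Type*} [AddCommGroup A] [Module ℂ A] [Coalgebra ℂ A]
    (φ ψ : A →ₗ[ℂ] ℂ) : A →ₗ[ℂ] ℂ :=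
  (LinearMap.mul' ℂ ℂ) ∘ₗ (TensorProduct.map φ ψ) ∘ₗ Coalgebra.comul

/-- Convolution powers: `ψ^{⋆0} = δ`, `ψ^{⋆(n+1)} = ψ^{⋆n} ⋆ ψ`. -/
noncomputable def convPow {A : Type*} [AddCommGroup A] [Module ℂ A] [Coalgebra ℂ A]
    (ψ : A →ₗ[ℂ] ℂ) : ℕ → (A →ₗ[ℂ] ℂ)
  | 0 => Coalgebra.counit
  | n + 1 => conv (convPow ψ n) ψ

/-- Convolving with `ψ` is the same as precomposing with `opT ψ`. -/
lemma conv_eq_comp {A : Type*} [AddCommGroup A] [Module ℂ A] [Coalgebra ℂ A]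
    (φ ψ : A →ₗ[ℂ] ℂ) (c : A) : conv φ ψ c = φ (opT ψ c) := by
  have key : ∀ z : A ⊗[ℂ] A,
      (LinearMap.mul' ℂ ℂ) (TensorProduct.map φ ψ z)
        = φ ((TensorProduct.rid ℂ A) (TensorProduct.map LinearMap.id ψ z)) := by
    intro z
    induction z using TensorProduct.induction_on with
    | zero => simp
    | tmul a b => simp [mul_comm]
    | add x y hx hy => simp [hx, hy]
  simpa [conv, opT] using key (Coalgebra.comul c)

/-- The key algebraic identity: `ψ^{⋆n} = δ ∘ (T ψ)ⁿ`. -/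
lemma convPow_eq {A : Type*} [AddCommGroup A] [Module ℂ A] [Coalgebra ℂ A]
    (ψ : A →ₗ[ℂ] ℂ) (n : ℕ) (c : A) :
    convPow ψ n c = Coalgebra.counit ((opT ψ ^ n) c) := by
  induction n generalizing c with
  | zero => simp [convPow]
  | succ n ih =>
    rw [convPow, conv_eq_comp, ih, pow_succ, Module.End.mul_apply]

/-- Summability of the operator-exponential series, via restriction to a
finite-dimensional stable submodule. -/
lemma summable_counit_pow {A : Type*} [AddCommGroup A] [Module ℂ A] [Coalgebra ℂ A]
    (hFT : ∀ c : A, ∃ D : Submodule ℂ A, FiniteDimensional ℂ D ∧ c ∈ D ∧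
      ∀ d ∈ D, Coalgebra.comul d ∈
        LinearMap.range (TensorProduct.map D.subtype D.subtype))
    (ψ : A →ₗ[ℂ] ℂ) (c : A) :
    Summable (fun n : ℕ => Coalgebra.counit ((opT ψ ^ n) c) / (n.factorial : ℂ)) := by
  obtain ⟨D, hfin, hc, hD⟩ := hFT c
  -- `opT ψ` maps `D` into itself.
  have hmem : ∀ d ∈ D, opT ψ d ∈ D := by
    intro d hd
    obtain ⟨x, hx⟩ := hD d hd
    have : opT ψ d = (TensorProduct.rid ℂ A)
        (TensorProduct.map LinearMap.id ψ (TensorProduct.map D.subtype D.subtype x)) := by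
      simp [opT, hx]
    rw [this]
    clear this hx
    induction x using TensorProduct.induction_on with
    | zero => simp
    | tmul a b => simpa using D.smul_mem (ψ b.1) a.2
    | add x y hx hy => simpa [map_add] using D.add_mem hx hy
  set T' : D →ₗ[ℂ] D := (opT ψ).restrict hmem with hT'
  have hpow : ∀ (n : ℕ) (d : D), (opT ψ ^ n) (d : A) = ((T' ^ n) d : A) := by
    intro n
    induction n with
    | zero => intro d; simp
    | succ n ih =>
        intro d
        rw [pow_succ', pow_succ', Module.End.mul_apply, Module.End.mul_apply]
        rw [ih d, hT', LinearMap.restrict_coe_apply]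
  -- transport to the normed space `Fin k → ℂ`
  haveI := hfin
  let e := (Module.finBasis ℂ D).equivFun
  let L : (Fin (Module.finrank ℂ D) → ℂ) →ₗ[ℂ] (Fin (Module.finrank ℂ D) → ℂ) :=
    e.toLinearMap ∘ₗ T' ∘ₗ e.symm.toLinearMap
  let Lc := LinearMap.toContinuousLinearMap L
  let δc := LinearMap.toContinuousLinearMap
    ((Coalgebra.counit ∘ₗ D.subtype) ∘ₗ e.symm.toLinearMap)
  have hL : ∀ n (v : Fin (Module.finrank ℂ D) → ℂ),
      (T' ^ n) (e.symm v) = e.symm ((Lc ^ n) v) := by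
    intro n
    induction n with
    | zero => simp
    | succ n ih =>
        intro v
        rw [pow_succ', pow_succ', Module.End.mul_apply, ContinuousLinearMap.mul_apply, ih]
        simp [Lc, L]
  have hval : ∀ n : ℕ, Coalgebra.counit ((opT ψ ^ n) c)
      = δc ((Lc ^ n) (e ⟨c, hc⟩)) := by
    intro n
    have := hL n (e ⟨c, hc⟩)
    simp only [LinearEquiv.symm_apply_apply] at this
    rw [hpow n ⟨c, hc⟩, this]
    simp [δc]
  have hsum : Summable (fun n : ℕ =>
      (‖δc‖ * ‖e ⟨c, hc⟩‖) * (‖Lc‖ ^ n / n.factorial)) :=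
    (Real.summable_pow_div_factorial ‖Lc‖).mul_left _
  refine Summable.of_norm_bounded hsum ?_
  intro n
  rw [hval n]
  have hpb : ∀ (m : ℕ) (w : Fin (Module.finrank ℂ D) → ℂ),
      ‖(Lc ^ m) w‖ ≤ ‖Lc‖ ^ m * ‖w‖ := by
    intro m
    induction m with
    | zero => intro w; simp
    | succ m ihm =>
        intro w
        rw [pow_succ', ContinuousLinearMap.mul_apply]
        calc ‖Lc ((Lc ^ m) w)‖ ≤ ‖Lc‖ * ‖(Lc ^ m) w‖ := Lc.le_opNorm _
          _ ≤ ‖Lc‖ * (‖Lc‖ ^ m * ‖w‖) :=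
              mul_le_mul_of_nonneg_left (ihm w) (norm_nonneg _)
          _ = ‖Lc‖ ^ (m + 1) * ‖w‖ := by ring
  have h1 : ‖δc ((Lc ^ n) (e ⟨c, hc⟩))‖ ≤ ‖δc‖ * (‖Lc‖ ^ n * ‖e ⟨c, hc⟩‖) :=
    le_trans (δc.le_opNorm _)
      (mul_le_mul_of_nonneg_left (hpb n _) (norm_nonneg _))
  have h2 : (0:ℝ) < n.factorial := by positivity
  rw [norm_div, Complex.norm_natCast]
  rw [div_le_iff₀ h2] at *
  calc ‖δc ((Lc ^ n) (e ⟨c, hc⟩))‖ ≤ ‖δc‖ * (‖Lc‖ ^ n * ‖e ⟨c, hc⟩‖) := h1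
    _ = ‖δc‖ * ‖e ⟨c, hc⟩‖ * (‖Lc‖ ^ n / ↑n.factorial) * ↑n.factorial := by
        field_simp

/-- if every element lies in a finite-dimensional sub-coalgebra
(Fundamental Theorem of Coalgebras), the convolution exponential series
`e_⋆^ψ(c) = Σ ψ^{⋆n}(c)/n!` converges and equals `δ(e^{T(ψ)} c)`
(the latter written as the convergent series `Σ δ(T(ψ)ⁿ c)/n!`). -/
theorem stmt7 {A : Type*} [AddCommGroup A] [Module ℂ A] [Coalgebra ℂ A]
    (hFT : ∀ c : A, ∃ D : Submodule ℂ A, FiniteDimensional ℂ D ∧ c ∈ D ∧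
      ∀ d ∈ D, Coalgebra.comul d ∈
        LinearMap.range (TensorProduct.map D.subtype D.subtype))
    (ψ : A →ₗ[ℂ] ℂ) (c : A) :
    Summable (fun n : ℕ => convPow ψ n c / (n.factorial : ℂ))
      ∧ Summable (fun n : ℕ => Coalgebra.counit ((opT ψ ^ n) c) / (n.factorial : ℂ))
      ∧ ∑' n : ℕ, convPow ψ n c / (n.factorial : ℂ)
          = ∑' n : ℕ, Coalgebra.counit ((opT ψ ^ n) c) / (n.factorial : ℂ) := by
  have hfun : (fun n : ℕ => convPow ψ n c / (n.factorial : ℂ))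
      = fun n : ℕ => Coalgebra.counit ((opT ψ ^ n) c) / (n.factorial : ℂ) := by
    funext n; rw [convPow_eq]
  have hs := summable_counit_pow hFT ψ c
  exact ⟨hfun ▸ hs, hs, by rw [hfun]⟩
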